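/- For every ν ≥ 0 and every s ∈ [0, j_ν] (where j_ν is the first positive zero of the Bessel function J_ν), one has ∫₀^s ((t^{-ν} J_ν(t))')² t^{2ν+1} dt ≤ ∫₀^s J_ν(t)² t dt. -/

import Mathlib

open MeasureTheory Real Set Filter Topology

/-- Bessel function of the first kind of order `ν`. -/
noncomputable def besselJ (ν x : ℝ) : ℝ :=
  ∑' k : ℕ, ((-1 : ℝ) ^ k / (Nat.factorial k * Real.Gamma (ν + k + 1))) *
    (x / 2) ^ (2 * (k : ℝ) + ν)

/-- First positive zero `j_ν` of the Bessel function `J_ν`. -/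
noncomputable def besselJZero (ν : ℝ) : ℝ :=
  sInf {x : ℝ | 0 < x ∧ besselJ ν x = 0}

namespace BesselAux

/-- coefficients of the reduced Bessel power series -/
noncomputable def a (ν : ℝ) (k : ℕ) : ℝ :=
  (-1 : ℝ) ^ k / (Nat.factorial k * Real.Gamma (ν + k + 1))

/-- the reduced Bessel function -/
noncomputable def g (ν y : ℝ) : ℝ := ∑' k : ℕ, a ν k * y ^ k

variable {ν : ℝ}

lemma gamma_lower {ν : ℝ} (hν : 0 ≤ ν) (k : ℕ) :
    (Nat.factorial k : ℝ) * Real.Gamma (ν + 1) ≤ Real.Gamma (ν + k + 1) := by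
  induction k with
  | zero => simp
  | succ k ih =>
    have h1 : Real.Gamma (ν + ((k :ℕ)+ 1 : ℕ) + 1) = (ν + k + 1) * Real.Gamma (ν + k + 1) := by
      have h2 : ν + ((k:ℕ) + 1 : ℕ) + 1 = (ν + (k:ℝ) + 1) + 1 := by push_cast; ring
      rw [h2, Real.Gamma_add_one (by positivity)]
    rw [h1]
    have h2 : ((k+1 : ℕ) : ℝ) * ((Nat.factorial k : ℝ) * Real.Gamma (ν + 1))
        ≤ (ν + k + 1) * Real.Gamma (ν + k + 1) := by
      apply mul_le_mul
      · push_cast; linarith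
      · exact ih
      · positivity
      · positivity
    calc ((Nat.factorial (k+1) : ℝ)) * Real.Gamma (ν + 1)
        = ((k+1 : ℕ) : ℝ) * ((Nat.factorial k : ℝ) * Real.Gamma (ν + 1)) := by
          rw [Nat.factorial_succ]; push_cast; ring
      _ ≤ _ := h2

lemma gamma_arg_pos {ν : ℝ} (hν : 0 ≤ ν) (k : ℕ) : 0 < Real.Gamma (ν + k + 1) :=
  Real.Gamma_pos_of_pos (by positivity)

lemma abs_a_le {ν : ℝ} (hν : 0 ≤ ν) (k : ℕ) :
    |a ν k| ≤ (Real.Gamma (ν + 1))⁻¹ * ((Nat.factorial k : ℝ))⁻¹ := by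
  have hf : (0:ℝ) < Nat.factorial k := by positivity
  have hg := gamma_arg_pos hν k
  have hg1 : (0:ℝ) < Real.Gamma (ν + 1) := Real.Gamma_pos_of_pos (by positivity)
  have : |a ν k| = (Nat.factorial k * Real.Gamma (ν + k + 1))⁻¹ := by
    rw [a, abs_div, abs_pow, abs_neg, abs_one, one_pow, one_div, abs_of_pos (by positivity)]
  rw [this, ← mul_inv]
  rw [inv_le_inv₀ (by positivity) (by positivity)]
  calc Real.Gamma (ν+1) * (Nat.factorial k : ℝ)
      = (Nat.factorial k : ℝ) * Real.Gamma (ν+1) := by ring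
    _ ≤ Real.Gamma (ν + k + 1) := gamma_lower hν k
    _ ≤ (Nat.factorial k : ℝ) * Real.Gamma (ν + k + 1) := by
        nlinarith [Nat.one_le_iff_ne_zero.2 (Nat.factorial_ne_zero k), hg,
          (by exact_mod_cast Nat.one_le_iff_ne_zero.2 (Nat.factorial_ne_zero k) : (1:ℝ) ≤ Nat.factorial k)]

lemma summable_bound {ν : ℝ} (hν : 0 ≤ ν) (r : ℝ) :
    Summable (fun k : ℕ => (Real.Gamma (ν + 1))⁻¹ * ((Nat.factorial k : ℝ))⁻¹ * r ^ k) := by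
  have := (Real.summable_pow_div_factorial r).mul_left (Real.Gamma (ν + 1))⁻¹
  apply this.congr
  intro k
  rw [div_eq_mul_inv]
  ring

lemma summable_term {ν : ℝ} (hν : 0 ≤ ν) (y : ℝ) :
    Summable (fun k : ℕ => a ν k * y ^ k) := by
  apply Summable.of_norm
  apply Summable.of_nonneg_of_le (fun k => norm_nonneg _)
    (fun k => ?_) ((summable_bound hν |y|).congr (fun k => rfl))
  rw [norm_mul, norm_pow]
  calc ‖a ν k‖ * ‖y‖ ^ k ≤ (Real.Gamma (ν + 1))⁻¹ * ((Nat.factorial k : ℝ))⁻¹ * ‖y‖ ^ k := by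
        apply mul_le_mul_of_nonneg_right (abs_a_le hν k) (by positivity)
    _ = _ := rfl

lemma a_succ (ν : ℝ) (k : ℕ) : ((k : ℝ) + 1) * a ν (k + 1) = -(a (ν + 1) k) := by
  have hfac : (Nat.factorial (k+1) : ℝ) = ((k:ℝ)+1) * Nat.factorial k := by
    rw [Nat.factorial_succ]; push_cast; ring
  have harg : ν + ((k:ℕ)+1 : ℕ) + 1 = (ν + 1) + k + 1 := by push_cast; ring
  rw [a, a, harg, hfac]
  have h1 : (0:ℝ) < Nat.factorial k := by positivity
  have hg : Real.Gamma ((ν+1) + k + 1) ≠ 0 ∨ True := Or.inr trivial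
  rcases eq_or_ne (Real.Gamma ((ν+1) + k + 1)) 0 with h | h
  · rw [h]; simp
  · field_simp
    ring


/-- the term of the derivative series -/
noncomputable def d (ν : ℝ) (k : ℕ) (x : ℝ) : ℝ := a ν k * ((k : ℝ) * x ^ (k - 1))

lemma norm_d_le {ν : ℝ} (hν : 0 ≤ ν) {R : ℝ} (k : ℕ) {x : ℝ} (hx : |x| ≤ R) :
    ‖d ν k x‖ ≤ |a (ν+1) (k-1)| * R ^ (k - 1) := by
  have hR : 0 ≤ R := le_trans (abs_nonneg x) hx
  cases k with
  | zero =>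
    have hR : (0:ℝ) ≤ R := le_trans (abs_nonneg x) hx
    simp only [d, Nat.cast_zero, zero_mul, mul_zero, norm_zero]
    positivity
  | succ k =>
    have h1 : ‖d ν (k+1) x‖ = ((k:ℝ)+1) * |a ν (k+1)| * |x| ^ k := by
      rw [d, norm_mul]
      simp only [Nat.add_sub_cancel, Real.norm_eq_abs, abs_mul, abs_pow]
      rw [Nat.abs_cast]
      push_cast; ring
    have h2 : ((k:ℝ)+1) * |a ν (k+1)| = |a (ν+1) k| := by
      rw [← abs_neg (a (ν+1) k), ← a_succ ν k, abs_mul]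
      congr 1
      rw [abs_of_nonneg]; positivity
    rw [h1, h2]
    simp only [Nat.add_sub_cancel]
    exact mul_le_mul_of_nonneg_left (pow_le_pow_left₀ (abs_nonneg x) hx k) (abs_nonneg _)

lemma summable_shifted {ν : ℝ} (hν : 0 ≤ ν) {R : ℝ} (hR : 0 ≤ R) :
    Summable (fun k : ℕ => |a (ν+1) (k-1)| * R ^ (k-1)) := by
  rw [← summable_nat_add_iff 1]
  simp only [Nat.add_sub_cancel]
  have h := (summable_term (by linarith : (0:ℝ) ≤ ν + 1) |R|).abs
  apply Summable.of_nonneg_of_le (fun k => by positivity) (fun k => ?_) h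
  rw [abs_mul, abs_pow]
  apply mul_le_mul_of_nonneg_left _ (abs_nonneg _)
  rw [abs_abs]
  exact pow_le_pow_left₀ hR (le_abs_self R) _

lemma hasDerivAt_g {ν : ℝ} (hν : 0 ≤ ν) (y : ℝ) :
    HasDerivAt (g ν) (-(g (ν+1) y)) y := by
  set R := |y| + 1 with hRdef
  have hR0 : (0:ℝ) ≤ R := by positivity
  have hyR : y ∈ Ioo (-R) R := by
    constructor
    · have := neg_abs_le y; simp only [hRdef]; linarith
    · have := le_abs_self y; simp only [hRdef]; linarith
  have hbound : ∀ (k : ℕ), ∀ x ∈ Ioo (-R) R, ‖d ν k x‖ ≤ |a (ν+1) (k-1)| * R ^ (k-1) := by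
    intro k x hx
    exact norm_d_le hν k (abs_le.mpr ⟨hx.1.le, hx.2.le⟩)
  have hunif : TendstoUniformlyOn (fun N x => ∑ k ∈ Finset.range N, d ν k x)
      (fun x => ∑' k, d ν k x) atTop (Ioo (-R) R) :=
    tendstoUniformlyOn_tsum_nat (summable_shifted hν hR0) hbound
  have hderiv : ∀ N : ℕ, ∀ x ∈ Ioo (-R) R,
      HasDerivAt (fun x => ∑ k ∈ Finset.range N, a ν k * x ^ k)
        (∑ k ∈ Finset.range N, d ν k x) x := by
    intro N x _
    apply HasDerivAt.fun_sum
    intro k _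
    simpa [d] using (hasDerivAt_pow k x).const_mul (a ν k)
  have hlim : ∀ x ∈ Ioo (-R) R,
      Tendsto (fun N => ∑ k ∈ Finset.range N, a ν k * x ^ k) atTop (𝓝 (g ν x)) :=
    fun x _ => (summable_term hν x).hasSum.tendsto_sum_nat
  have key : HasDerivAt (g ν) (∑' k, d ν k y) y :=
    hasDerivAt_of_tendstoUniformlyOn isOpen_Ioo hunif
      (Filter.Eventually.of_forall hderiv) hlim hyR
  have hsummd : Summable (fun k => d ν k y) := by
    apply Summable.of_norm
    exact Summable.of_nonneg_of_le (fun k => norm_nonneg _)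
      (fun k => hbound k y hyR) (summable_shifted hν hR0)
  have htsum : ∑' k, d ν k y = -(g (ν+1) y) := by
    rw [Summable.tsum_eq_zero_add hsummd]
    have h0 : d ν 0 y = 0 := by simp [d]
    have hsucc : ∀ k : ℕ, d ν (k+1) y = -(a (ν+1) k * y ^ k) := by
      intro k
      have : d ν (k+1) y = (((k:ℝ)+1) * a ν (k+1)) * y ^ k := by
        simp only [d, Nat.add_sub_cancel]; push_cast; ring
      rw [this, a_succ]; ring
    rw [h0, zero_add]
    calc ∑' k, d ν (k+1) y = ∑' k : ℕ, -(a (ν+1) k * y ^ k) := tsum_congr hsucc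
      _ = -(g (ν+1) y) := by rw [tsum_neg]; rfl
  rw [← htsum]
  exact key


lemma g_cont {ν : ℝ} (hν : 0 ≤ ν) : Continuous (g ν) :=
  continuous_iff_continuousAt.2 fun y => (hasDerivAt_g hν y).continuousAt

lemma g_zero (ν : ℝ) : g ν 0 = 1 / Real.Gamma (ν + 1) := by
  rw [g, tsum_eq_single 0 (fun k hk => by simp [zero_pow hk])]
  simp [a]

lemma g_zero_pos {ν : ℝ} (hν : 0 ≤ ν) : 0 < g ν 0 := by
  rw [g_zero]
  have := Real.Gamma_pos_of_pos (show (0:ℝ) < ν + 1 by linarith)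
  positivity

lemma coeff_zero {ν : ℝ} (hν : 0 ≤ ν) : (ν+1) * a (ν+1) 0 = a ν 0 := by
  have h1 : Real.Gamma (ν + 1 + 1) = (ν+1) * Real.Gamma (ν+1) := Real.Gamma_add_one (by positivity)
  have h2 : Real.Gamma (ν+1) ≠ 0 := (Real.Gamma_pos_of_pos (by linarith)).ne'
  simp only [a, Nat.cast_zero, Nat.factorial_zero, Nat.cast_one, pow_zero, one_mul, add_zero]
  rw [h1]
  field_simp

lemma coeff_succ {ν : ℝ} (hν : 0 ≤ ν) (k : ℕ) :
    (ν+1) * a (ν+1) (k+1) = a ν (k+1) + a (ν+2) k := by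
  have hA : (0:ℝ) < Real.Gamma (ν + (k+1:ℕ) + 1) := gamma_arg_pos hν (k+1)
  have harg1 : (ν+1) + ((k+1:ℕ):ℝ) + 1 = (ν + (k+1:ℕ) + 1) + 1 := by push_cast; ring
  have harg2 : (ν+2) + (k:ℝ) + 1 = (ν + (k+1:ℕ) + 1) + 1 := by push_cast; ring
  have hG : Real.Gamma ((ν + (k+1:ℕ) + 1) + 1) = (ν + (k+1:ℕ) + 1) * Real.Gamma (ν + (k+1:ℕ) + 1) :=
    Real.Gamma_add_one (by positivity)
  have hfac : (Nat.factorial (k+1) : ℝ) = ((k:ℝ)+1) * Nat.factorial k := by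
    rw [Nat.factorial_succ]; push_cast; ring
  have hf0 : (0:ℝ) < Nat.factorial k := by positivity
  have hnk : (0:ℝ) < ν + (k+1:ℕ) + 1 := by push_cast; positivity
  rw [a, a, a, harg1, harg2, hG, hfac]
  have hp : ((-1:ℝ))^(k+1) = -(-1:ℝ)^k := by rw [pow_succ]; ring
  rw [hp]
  field_simp
  push_cast
  ring

lemma g_rec {ν : ℝ} (hν : 0 ≤ ν) (y : ℝ) :
    (ν+1) * g (ν+1) y = g ν y + y * g (ν+2) y := by
  have h1 : (0:ℝ) ≤ ν + 1 := by linarith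
  have h2 : (0:ℝ) ≤ ν + 2 := by linarith
  have hs1 := summable_term h1 y
  have hs2 := summable_term h2 y
  have hs0 := summable_term hν y
  -- e k : shifted series
  have hse : Summable (fun k : ℕ => a (ν+2) k * y ^ (k+1)) := by
    have := hs2.mul_left y
    apply this.congr
    intro k
    rw [pow_succ']
    ring
  have hterm : ∀ k : ℕ, (ν+1) * (a (ν+1) k * y ^ k)
      = a ν k * y ^ k + (fun k : ℕ => match k with
        | 0 => (0:ℝ)
        | (k+1) => a (ν+2) k * y ^ (k+1)) k := by
    intro k
    cases k with
    | zero =>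
      simp only [pow_zero, mul_one, add_zero]
      rw [coeff_zero hν]
    | succ k =>
      simp only []
      rw [← mul_assoc, coeff_succ hν k, add_mul]
  have hsume : Summable (fun k : ℕ => (fun k : ℕ => match k with
        | 0 => (0:ℝ)
        | (k+1) => a (ν+2) k * y ^ (k+1)) k) := by
    rw [← summable_nat_add_iff 1]
    exact hse
  calc (ν+1) * g (ν+1) y = ∑' k : ℕ, (ν+1) * (a (ν+1) k * y ^ k) := by
        rw [g, tsum_mul_left]
    _ = ∑' k : ℕ, (a ν k * y ^ k + (fun k : ℕ => match k with
        | 0 => (0:ℝ)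
        | (k+1) => a (ν+2) k * y ^ (k+1)) k) := tsum_congr hterm
    _ = g ν y + y * g (ν+2) y := by
        rw [Summable.tsum_add hs0 hsume, g]
        congr 1
        rw [Summable.tsum_eq_zero_add hsume]
        simp only [zero_add]
        rw [g, ← tsum_mul_left]
        apply tsum_congr
        intro k
        rw [pow_succ']
        ring

lemma besselJ_eq {ν : ℝ} (hν : 0 ≤ ν) {x : ℝ} (hx : 0 < x) :
    besselJ ν x = x ^ ν * ((2:ℝ) ^ (-ν) * g ν ((x/2)^2)) := by
  have hx2 : 0 < x / 2 := by linarith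
  have hterm : ∀ k : ℕ, ((-1 : ℝ) ^ k / (Nat.factorial k * Real.Gamma (ν + k + 1))) *
      (x / 2) ^ (2 * (k : ℝ) + ν) = (a ν k * ((x/2)^2) ^ k) * (x ^ ν * (2:ℝ) ^ (-ν)) := by
    intro k
    have h1 : (x / 2) ^ (2 * (k : ℝ) + ν) = (x/2) ^ ((2*k : ℕ) : ℝ) * (x/2) ^ ν := by
      rw [← Real.rpow_add hx2]
      congr 1
      push_cast; ring
    have h2 : (x/2 : ℝ) ^ ((2*k : ℕ) : ℝ) = ((x/2)^2) ^ k := by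
      rw [Real.rpow_natCast, pow_mul]
    have h3 : (x/2 : ℝ) ^ ν = x ^ ν * (2:ℝ) ^ (-ν) := by
      rw [Real.div_rpow hx.le (by norm_num), Real.rpow_neg (by norm_num), div_eq_mul_inv]
    rw [h1, h2, h3, a]
    ring
  rw [besselJ]
  calc ∑' k : ℕ, ((-1 : ℝ) ^ k / (Nat.factorial k * Real.Gamma (ν + k + 1))) *
      (x / 2) ^ (2 * (k : ℝ) + ν)
      = ∑' k : ℕ, (a ν k * ((x/2)^2) ^ k) * (x ^ ν * (2:ℝ) ^ (-ν)) := tsum_congr hterm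
    _ = _ := by rw [tsum_mul_right, g]; ring


/-- integrand of the left side -/
noncomputable def L (ν t : ℝ) : ℝ :=
  ((2:ℝ) ^ (-ν) * (t/2) * g (ν+1) ((t/2)^2))^2 * t ^ (2*ν+1)

/-- integrand of the right side -/
noncomputable def Rf (ν t : ℝ) : ℝ :=
  ((2:ℝ) ^ (-ν) * g ν ((t/2)^2))^2 * t ^ (2*ν+1)

/-- boundary term -/
noncomputable def Cf (ν s : ℝ) : ℝ :=
  -(((2:ℝ) ^ (-ν))^2/2 * (g ν ((s/2)^2) * g (ν+1) ((s/2)^2)) * s ^ (2*ν+2))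


lemma hasDerivAt_inner (t : ℝ) : HasDerivAt (fun u : ℝ => (u/2)^2) (t/2) t := by
  have h := ((hasDerivAt_id t).div_const 2).fun_pow 2
  refine h.congr_deriv ?_
  simp
  ring

lemma hasDerivAt_gcomp (hν : 0 ≤ ν) (t : ℝ) :
    HasDerivAt (fun u : ℝ => g ν ((u/2)^2)) (-(g (ν+1) ((t/2)^2)) * (t/2)) t :=
  HasDerivAt.comp (h₂ := g ν) t (hasDerivAt_g hν ((t/2)^2)) (hasDerivAt_inner t)

lemma cont_rpow {p : ℝ} (hp : 0 ≤ p) : Continuous (fun t : ℝ => t ^ p) :=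
  Real.continuous_rpow_const hp

lemma L_cont (hν : 0 ≤ ν) : Continuous (L ν) := by
  apply Continuous.mul _ (cont_rpow (by linarith))
  have h1 : Continuous (g (ν+1)) := g_cont (by linarith)
  fun_prop

lemma Rf_cont (hν : 0 ≤ ν) : Continuous (Rf ν) := by
  apply Continuous.mul _ (cont_rpow (by linarith))
  have := g_cont hν
  fun_prop


/-- derivative of the boundary term -/
noncomputable def Cd (ν s : ℝ) : ℝ :=
  -(((2:ℝ) ^ (-ν))^2/2 *
    (((-(g (ν+1) ((s/2)^2)) * (s/2)) * g (ν+1) ((s/2)^2)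
      + g ν ((s/2)^2) * (-(g (ν+2) ((s/2)^2)) * (s/2))) * s ^ (2*ν+2)
     + (g ν ((s/2)^2) * g (ν+1) ((s/2)^2)) * ((2*ν+2) * s ^ (2*ν+1))))

lemma hasDerivAt_Cf (hν : 0 ≤ ν) (s : ℝ) : HasDerivAt (Cf ν) (Cd ν s) s := by
  have h1 : HasDerivAt (fun u : ℝ => g ν ((u/2)^2) * g (ν+1) ((u/2)^2))
      ((-(g (ν+1) ((s/2)^2)) * (s/2)) * g (ν+1) ((s/2)^2)
        + g ν ((s/2)^2) * (-(g (ν+2) ((s/2)^2)) * (s/2))) s := by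
    have ha := hasDerivAt_gcomp hν s
    have hb := hasDerivAt_gcomp (show (0:ℝ) ≤ ν + 1 by linarith) s
    have := ha.fun_mul hb
    exact this.congr_deriv (by ring_nf)
  have h2 : HasDerivAt (fun u : ℝ => u ^ (2*ν+2)) ((2*ν+2) * s ^ (2*ν+1)) s := by
    have h2a := Real.hasDerivAt_rpow_const (x := s) (p := 2*ν+2) (Or.inr (by linarith))
    have : (2*ν+2-1 : ℝ) = 2*ν+1 := by ring
    rw [this] at h2a
    exact h2a
  have h3 := h1.fun_mul h2
  have h4 := (h3.const_mul (((2:ℝ) ^ (-ν))^2/2)).fun_neg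
  refine h4.congr_of_eventuallyEq (Filter.Eventually.of_forall fun u => ?_)
  · unfold Cf
    ring

lemma intL (hν : 0 ≤ ν) (x : ℝ) :
    HasDerivAt (fun s : ℝ => ∫ t in (0:ℝ)..s, L ν t) (L ν x) x := by
  exact intervalIntegral.integral_hasDerivAt_right ((L_cont hν).intervalIntegrable _ _)
    ((L_cont hν).stronglyMeasurableAtFilter _ _) (L_cont hν).continuousAt

lemma intR (hν : 0 ≤ ν) (x : ℝ) :
    HasDerivAt (fun s : ℝ => ∫ t in (0:ℝ)..s, Rf ν t) (Rf ν x) x := by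
  exact intervalIntegral.integral_hasDerivAt_right ((Rf_cont hν).intervalIntegrable _ _)
    ((Rf_cont hν).stronglyMeasurableAtFilter _ _) (Rf_cont hν).continuousAt

lemma rpow_succ_eq {x : ℝ} (hx : 0 < x) (p : ℝ) : x ^ (p+1) = x ^ p * x := by
  rw [Real.rpow_add_one hx.ne']

lemma deriv_zero (hν : 0 ≤ ν) {x : ℝ} (hx : 0 ≤ x) :
    L ν x - Rf ν x - Cd ν x = 0 := by
  rcases eq_or_lt_of_le hx with h | h
  · subst h
    have h1 : (0:ℝ) ^ (2*ν+1) = 0 := Real.zero_rpow (by positivity)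
    have h2 : (0:ℝ) ^ (2*ν+2) = 0 := Real.zero_rpow (by positivity)
    simp only [L, Rf, Cd, h1, h2]
    norm_num
  · have h1 : x ^ (2*ν+2) = x ^ (2*ν+1) * x := by
      have : (2*ν+2 : ℝ) = (2*ν+1) + 1 := by ring
      rw [this, rpow_succ_eq h]
    have hrec := g_rec hν ((x/2)^2)
    have hu : g ν ((x/2)^2) = (ν+1) * g (ν+1) ((x/2)^2) - (x/2)^2 * g (ν+2) ((x/2)^2) := by
      linarith
    simp only [L, Rf, Cd, h1]
    rw [hu]
    ring


lemma integral_identity (hν : 0 ≤ ν) {s : ℝ} (hs : 0 ≤ s) :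
    ∫ t in (0:ℝ)..s, L ν t = (∫ t in (0:ℝ)..s, Rf ν t) + Cf ν s := by
  set Φ : ℝ → ℝ := fun x => (∫ t in (0:ℝ)..x, L ν t) - (∫ t in (0:ℝ)..x, Rf ν t) - Cf ν x
    with hΦdef
  have hΦd : ∀ x, 0 ≤ x → HasDerivAt Φ 0 x := by
    intro x hx
    have h := ((intL hν x).sub (intR hν x)).sub (hasDerivAt_Cf hν x)
    rwa [deriv_zero hν hx] at h
  have hcont : ContinuousOn Φ (Icc 0 s) := fun x hx =>
    (((intL hν x).sub (intR hν x)).sub (hasDerivAt_Cf hν x)).continuousAt.continuousWithinAt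
  have hder : ∀ x ∈ Ico 0 s, HasDerivWithinAt Φ 0 (Ici x) x := fun x hx =>
    (hΦd x hx.1).hasDerivWithinAt
  have hconst := constant_of_has_deriv_right_zero hcont hder s (right_mem_Icc.2 hs)
  have hΦ0 : Φ 0 = 0 := by
    have h2 : (0:ℝ) ^ (2*ν+2) = 0 := Real.zero_rpow (by positivity)
    simp only [hΦdef, intervalIntegral.integral_same, Cf, h2]
    ring
  have : Φ s = 0 := hconst.trans hΦ0
  simp only [hΦdef] at this
  linarith

lemma P_nonneg (hν : 0 ≤ ν) {s : ℝ} (hsj : s ≤ besselJZero ν)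
    {t : ℝ} (ht0 : 0 ≤ t) (hts : t ≤ s) : 0 ≤ g ν ((t/2)^2) := by
  by_contra hneg
  push_neg at hneg
  set φ : ℝ → ℝ := fun u => g ν ((u/2)^2) with hφ
  have hφc : Continuous φ := by
    have := g_cont hν
    fun_prop
  have hφ0 : 0 < φ 0 := by
    simp only [hφ]
    norm_num
    exact g_zero_pos hν
  have hmem : (0:ℝ) ∈ Icc (φ t) (φ 0) := ⟨hneg.le, hφ0.le⟩
  obtain ⟨x, hx, hφx⟩ := intermediate_value_Icc' ht0 hφc.continuousOn hmem
  have hx0 : x ≠ 0 := by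
    intro h
    rw [h] at hφx
    exact absurd hφx hφ0.ne'
  have hxt : x ≠ t := by
    intro h
    rw [h] at hφx
    simp only [hφ] at hφx
    linarith
  have hxpos : 0 < x := lt_of_le_of_ne hx.1 (Ne.symm hx0)
  simp only [hφ] at hφx
  have hzero : besselJ ν x = 0 := by
    rw [besselJ_eq hν hxpos, hφx]
    ring
  have hbdd : BddBelow {y : ℝ | 0 < y ∧ besselJ ν y = 0} := ⟨0, fun y hy => hy.1.le⟩
  have hle : besselJZero ν ≤ x := csInf_le hbdd ⟨hxpos, hzero⟩
  have : x < t := lt_of_le_of_ne hx.2 hxt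
  have : x < besselJZero ν := lt_of_lt_of_le this (le_trans hts hsj)
  linarith

lemma Q_nonneg (hν : 0 ≤ ν) {s : ℝ} (hs0 : 0 < s) (hsj : s ≤ besselJZero ν) :
    0 ≤ g (ν+1) ((s/2)^2) := by
  set Y : ℝ := (s/2)^2 with hY
  have hY0 : 0 < Y := by positivity
  set M : ℝ → ℝ := fun y => y ^ (ν+1) * g (ν+1) y with hM
  have hMd : ∀ y ∈ Ioo (0:ℝ) Y, HasDerivAt M (y ^ ν * g ν y) y := by
    intro y hy
    have h1 : HasDerivAt (fun y : ℝ => y ^ (ν+1)) ((ν+1) * y ^ ν) y := by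
      have := Real.hasDerivAt_rpow_const (x := y) (p := ν+1) (Or.inl hy.1.ne')
      have he : (ν+1-1 : ℝ) = ν := by ring
      rwa [he] at this
    have h2 := hasDerivAt_g (show (0:ℝ) ≤ ν+1 by linarith) y
    rw [show (ν+1+1 : ℝ) = ν+2 by ring] at h2
    have h3 := h1.mul h2
    have hyy : y ^ (ν+1) = y ^ ν * y := by
      rw [Real.rpow_add_one hy.1.ne']
    have key : (ν+1) * y ^ ν * g (ν+1) y + y ^ (ν+1) * -(g (ν+2) y) = y ^ ν * g ν y := by
      rw [hyy]
      linear_combination y ^ ν * (g_rec hν y)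
    rwa [key] at h3
  have hMcont : ContinuousOn M (Icc 0 Y) := by
    apply ContinuousOn.mul
    · exact (Real.continuous_rpow_const (by linarith)).continuousOn
    · exact (g_cont (by linarith : (0:ℝ) ≤ ν+1)).continuousOn
  have hmono : MonotoneOn M (Icc 0 Y) := by
    apply monotoneOn_of_deriv_nonneg (convex_Icc 0 Y) hMcont
    · intro y hy
      rw [interior_Icc] at hy
      exact (hMd y hy).differentiableAt.differentiableWithinAt
    · intro y hy
      rw [interior_Icc] at hy
      rw [(hMd y hy).deriv]
      have hg : 0 ≤ g ν y := by
        have hsq : ((2 * Real.sqrt y / 2)^2) = y := by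
          rw [mul_div_cancel_left₀ _ (by norm_num : (2:ℝ) ≠ 0)]
          exact Real.sq_sqrt hy.1.le
        have htle : 2 * Real.sqrt y ≤ s := by
          have h1 : Real.sqrt y ≤ Real.sqrt Y := Real.sqrt_le_sqrt hy.2.le
          have h2 : Real.sqrt Y = s/2 := by
            rw [hY, Real.sqrt_sq (by positivity)]
          linarith
        have := P_nonneg hν hsj (by positivity : (0:ℝ) ≤ 2 * Real.sqrt y) htle
        rwa [hsq] at this
      have : (0:ℝ) ≤ y ^ ν := Real.rpow_nonneg hy.1.le ν
      positivity
  have hM0 : M 0 = 0 := by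
    simp only [hM]
    rw [Real.zero_rpow (by positivity : (ν+1 : ℝ) ≠ 0)]
    ring
  have hMY : 0 ≤ M Y := by
    have := hmono (left_mem_Icc.2 hY0.le) (right_mem_Icc.2 hY0.le) hY0.le
    rw [hM0] at this
    exact this
  have hYp : 0 < Y ^ (ν+1) := Real.rpow_pos_of_pos hY0 _
  have : 0 ≤ Y ^ (ν+1) * g (ν+1) Y := hMY
  nlinarith

end BesselAux

open BesselAux in
theorem bessel_derivative_integral_inequality (ν : ℝ) (hν : 0 ≤ ν)
    (s : ℝ) (hs : s ∈ Set.Icc 0 (besselJZero ν)) :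
    ∫ t in (0 : ℝ)..s,
        (deriv (fun u : ℝ => u ^ (-ν) * besselJ ν u) t) ^ 2 * t ^ (2 * ν + 1)
      ≤ ∫ t in (0 : ℝ)..s, (besselJ ν t) ^ 2 * t := by
  obtain ⟨hs0, hsj⟩ := hs
  rcases eq_or_lt_of_le hs0 with h | hs0'
  · rw [← h]
    simp
  have hL : (∫ t in (0:ℝ)..s,
        (deriv (fun u : ℝ => u ^ (-ν) * besselJ ν u) t) ^ 2 * t ^ (2 * ν + 1))
      = ∫ t in (0:ℝ)..s, L ν t := by
    apply intervalIntegral.integral_congr_ae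
    apply MeasureTheory.ae_of_all
    intro x hx
    rw [Set.uIoc_of_le hs0] at hx
    have hx0 : 0 < x := hx.1
    have heq : (fun u : ℝ => u ^ (-ν) * besselJ ν u)
        =ᶠ[nhds x] (fun u : ℝ => (2:ℝ)^(-ν) * g ν ((u/2)^2)) := by
      filter_upwards [isOpen_Ioi.mem_nhds hx0] with u hu
      rw [besselJ_eq hν hu, ← mul_assoc, ← Real.rpow_add hu]
      norm_num
    have hd : deriv (fun u : ℝ => u ^ (-ν) * besselJ ν u) x
        = (2:ℝ)^(-ν) * (-(g (ν+1) ((x/2)^2)) * (x/2)) := by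
      rw [heq.deriv_eq]
      exact ((hasDerivAt_gcomp hν x).const_mul ((2:ℝ)^(-ν))).deriv
    rw [hd, L]
    ring
  have hR : (∫ t in (0:ℝ)..s, (besselJ ν t)^2 * t) = ∫ t in (0:ℝ)..s, Rf ν t := by
    apply intervalIntegral.integral_congr_ae
    apply MeasureTheory.ae_of_all
    intro x hx
    rw [Set.uIoc_of_le hs0] at hx
    have hx0 : 0 < x := hx.1
    rw [besselJ_eq hν hx0, Rf]
    have hxp : x ^ (2*ν+1) = x ^ ν * x ^ ν * x := by
      rw [show (2*ν+1 : ℝ) = ν + (ν + 1) by ring, Real.rpow_add hx0,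
        Real.rpow_add_one hx0.ne', ← mul_assoc]
    rw [hxp]
    ring
  rw [hL, hR, integral_identity hν hs0]
  have hP := P_nonneg hν hsj hs0 le_rfl
  have hQ := Q_nonneg hν hs0' hsj
  have hsp : (0:ℝ) ≤ s ^ (2*ν+2) := Real.rpow_nonneg hs0 _
  have hc : (0:ℝ) ≤ ((2:ℝ)^(-ν))^2/2 := by positivity
  have hCf : Cf ν s ≤ 0 := by
    rw [Cf]
    apply neg_nonpos_of_nonneg
    exact mul_nonneg (mul_nonneg hc (mul_nonneg hP hQ)) hsp
  linarith
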